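/- Define vector polynomials Q_{n,m} recursively by Q_{n,0} = P_nᵗ (a row vector of n+1 polynomials of degree n in two variables with leading coefficient G_{n,0,n} = I_{n+1}) and Q_{n,m} = ∇(Q_{n+1,m-1}). If Q_{n,m} is expanded as Q_{n,m}(x,y) = Σ_{k=0}^{n} (I_{2^m} ⊗ X_kᵗ) G_{n,m,k}, then the leading coefficients satisfy the recurrence G_{n,m,n} = diag(I_{2^{m-1}} ⊗ N_{n+1,1}, I_{2^{m-1}} ⊗ N_{n+1,2}) · (G_{n+1,m-1,n+1}; G_{n+1,m-1,n+1}) for m ≥ 1, where the last factor is the vertical stack of two copies of G_{n+1,m-1,n+1}. -/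

import Mathlib

open Matrix MvPolynomial
open scoped Kronecker

noncomputable section

abbrev P2 : Type := MvPolynomial (Fin 2) ℝ

/-- The row vector `X_kᵗ` of monomials of total degree `k`. -/
def Xrow (k : ℕ) : Matrix (Fin 1) (Fin (k + 1)) P2 :=
  Matrix.of fun _ j => X 0 ^ (k - (j : ℕ)) * X 1 ^ (j : ℕ)

/-- `N_{s,1}`, the `s × (s+1)` real matrix with entries `(s+1-i)δ_{ij}` (one-based). -/
def Nr1 (s : ℕ) : Matrix (Fin s) (Fin (s + 1)) ℝ :=
  Matrix.of fun i j => if (i : ℕ) = (j : ℕ) then ((s - (i : ℕ) : ℕ) : ℝ) else 0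

/-- `N_{s,2}`, the `s × (s+1)` real matrix with entries `i·δ_{i+1,j}` (one-based). -/
def Nr2 (s : ℕ) : Matrix (Fin s) (Fin (s + 1)) ℝ :=
  Matrix.of fun i j => if (i : ℕ) + 1 = (j : ℕ) then (((i : ℕ) + 1 : ℕ) : ℝ) else 0

/-- The summand `(I_{2^m} ⊗ X_kᵗ) G` of the expansion of `Q_{n,m}`. -/
def termM (n m k : ℕ) (Gmat : Matrix (Fin (2 ^ m) × Fin (k + 1)) (Fin (n + m + 1)) ℝ) :
    Matrix (Fin (2 ^ m)) (Fin (n + m + 1)) P2 :=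
  (((1 : Matrix (Fin (2 ^ m)) (Fin (2 ^ m)) P2) ⊗ₖ Xrow k)
      * Gmat.map MvPolynomial.C).submatrix (fun i => (i, (0 : Fin 1))) id

/-- The canonical equivalence `Fin 2 × Fin (2^m) ≃ Fin (2^(m+1))`. -/
def eqv (m : ℕ) : Fin 2 × Fin (2 ^ m) ≃ Fin (2 ^ (m + 1)) :=
  finProdFinEquiv.trans (finCongr (by ring))

def mon (a b : ℕ) : Fin 2 →₀ ℕ := Finsupp.single 0 a + Finsupp.single 1 b

lemma mon_apply0 (a b : ℕ) : mon a b 0 = a := by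
  simp [mon, Finsupp.single_apply]

lemma mon_apply1 (a b : ℕ) : mon a b 1 = b := by
  simp [mon, Finsupp.single_apply]

lemma mon_eq_iff {a b c d : ℕ} : mon a b = mon c d ↔ a = c ∧ b = d := by
  constructor
  · intro h
    exact ⟨by simpa [mon_apply0] using congrArg (fun f => f 0) h,
           by simpa [mon_apply1] using congrArg (fun f => f 1) h⟩
  · rintro ⟨rfl, rfl⟩; rfl

lemma pow_mul_C (a b : ℕ) (r : ℝ) :
    (X (0:Fin 2) ^ a * X 1 ^ b : P2) * C r = monomial (mon a b) r := by
  rw [X_pow_eq_monomial, X_pow_eq_monomial, C_apply, monomial_mul, monomial_mul]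
  simp [mon]

lemma mon_sub0 (a b : ℕ) : mon (a+1) b - Finsupp.single 0 1 = mon a b := by
  ext x
  fin_cases x <;>
    simp [Finsupp.tsub_apply, mon_apply0, mon_apply1, Finsupp.single_apply]

lemma mon_sub1 (a b : ℕ) : mon a (b+1) - Finsupp.single 1 1 = mon a b := by
  ext x
  fin_cases x <;>
    simp [Finsupp.tsub_apply, mon_apply0, mon_apply1, Finsupp.single_apply]

lemma coeff_pderiv0 (q : P2) (a b : ℕ) :
    coeff (mon a b) (pderiv (0 : Fin 2) q) = ((a:ℝ)+1) * coeff (mon (a+1) b) q := by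
  conv_lhs => rw [q.as_sum, map_sum, coeff_sum]
  have key : ∀ s ∈ q.support,
      coeff (mon a b) (pderiv (0:Fin 2) (monomial s (coeff s q)))
        = if s = mon (a+1) b then coeff s q * ((a:ℝ)+1) else 0 := by
    intro s _
    rw [pderiv_monomial, coeff_monomial]
    by_cases h0 : s 0 = 0
    · have hsub : s - Finsupp.single (0:Fin 2) 1 = s := by
        ext x
        rcases eq_or_ne x 0 with rfl | hx
        · simp [Finsupp.tsub_apply, h0]
        · simp [Finsupp.tsub_apply, Finsupp.single_apply, Ne.symm hx]
      rw [hsub]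
      have hne : s ≠ mon (a+1) b := by
        intro h; rw [h] at h0; simp [mon_apply0] at h0
      by_cases h1 : s = mon a b
      · rw [if_pos h1, if_neg hne, h0]; simp
      · rw [if_neg h1, if_neg hne]
    · have hiff : s - Finsupp.single (0:Fin 2) 1 = mon a b ↔ s = mon (a+1) b := by
        constructor
        · intro h
          have : s = (s - Finsupp.single (0:Fin 2) 1) + Finsupp.single 0 1 := by
            ext x
            rcases eq_or_ne x 0 with rfl | hx
            · simp [Finsupp.tsub_apply, Finsupp.single_apply]; omega
            · simp [Finsupp.tsub_apply, Finsupp.single_apply, Ne.symm hx]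
          rw [this, h]
          ext x
          fin_cases x <;>
            simp [mon_apply0, mon_apply1, mon, Finsupp.single_apply]
        · intro h; rw [h]; exact mon_sub0 a b
      by_cases h1 : s = mon (a+1) b
      · have hs0 : s 0 = a + 1 := by rw [h1, mon_apply0]
        rw [if_pos (hiff.mpr h1), if_pos h1, hs0]
        push_cast; ring
      · simp [h1, (not_iff_not.mpr hiff).mpr h1]
  rw [Finset.sum_congr rfl key, Finset.sum_ite_eq' q.support (mon (a+1) b)
    (fun s => coeff s q * ((a:ℝ)+1))]
  by_cases h : mon (a+1) b ∈ q.support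
  · simp [h, mul_comm]
  · simp [h, MvPolynomial.notMem_support_iff.mp h]

lemma coeff_pderiv1 (q : P2) (a b : ℕ) :
    coeff (mon a b) (pderiv (1 : Fin 2) q) = ((b:ℝ)+1) * coeff (mon a (b+1)) q := by
  conv_lhs => rw [q.as_sum, map_sum, coeff_sum]
  have key : ∀ s ∈ q.support,
      coeff (mon a b) (pderiv (1:Fin 2) (monomial s (coeff s q)))
        = if s = mon a (b+1) then coeff s q * ((b:ℝ)+1) else 0 := by
    intro s _
    rw [pderiv_monomial, coeff_monomial]
    by_cases h0 : s 1 = 0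
    · have hsub : s - Finsupp.single (1:Fin 2) 1 = s := by
        ext x
        rcases eq_or_ne x 1 with rfl | hx
        · simp [Finsupp.tsub_apply, h0]
        · simp [Finsupp.tsub_apply, Finsupp.single_apply, Ne.symm hx]
      rw [hsub]
      have hne : s ≠ mon a (b+1) := by
        intro h; rw [h] at h0; simp [mon_apply1] at h0
      by_cases h1 : s = mon a b
      · rw [if_pos h1, if_neg hne, h0]; simp
      · rw [if_neg h1, if_neg hne]
    · have hiff : s - Finsupp.single (1:Fin 2) 1 = mon a b ↔ s = mon a (b+1) := by
        constructor
        · intro h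
          have : s = (s - Finsupp.single (1:Fin 2) 1) + Finsupp.single 1 1 := by
            ext x
            rcases eq_or_ne x 1 with rfl | hx
            · simp [Finsupp.tsub_apply, Finsupp.single_apply]; omega
            · simp [Finsupp.tsub_apply, Finsupp.single_apply, Ne.symm hx]
          rw [this, h]
          ext x
          fin_cases x <;>
            simp [mon_apply0, mon_apply1, mon, Finsupp.single_apply]
        · intro h; rw [h]; exact mon_sub1 a b
      by_cases h1 : s = mon a (b+1)
      · have hs1 : s 1 = b + 1 := by rw [h1, mon_apply1]
        rw [if_pos (hiff.mpr h1), if_pos h1, hs1]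
        push_cast; ring
      · simp [h1, (not_iff_not.mpr hiff).mpr h1]
  rw [Finset.sum_congr rfl key, Finset.sum_ite_eq' q.support (mon a (b+1))
    (fun s => coeff s q * ((b:ℝ)+1))]
  by_cases h : mon a (b+1) ∈ q.support
  · simp [h, mul_comm]
  · simp [h, MvPolynomial.notMem_support_iff.mp h]

lemma termM_apply (n m k : ℕ) (Gmat : Matrix (Fin (2 ^ m) × Fin (k + 1)) (Fin (n + m + 1)) ℝ)
    (i : Fin (2 ^ m)) (c : Fin (n + m + 1)) :
    termM n m k Gmat i c
      = ∑ j : Fin (k + 1), monomial (mon (k - (j:ℕ)) (j:ℕ)) (Gmat (i, j) c) := by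
  simp only [termM, Matrix.submatrix_apply, Matrix.mul_apply, id_eq, Matrix.map_apply]
  change (∑ x, ((1 : Matrix (Fin (2 ^ m)) (Fin (2 ^ m)) P2) ⊗ₖ Xrow k) (i, 0) x * C (Gmat x c)) = _
  rw [Fintype.sum_prod_type]
  rw [Finset.sum_eq_single i]
  · apply Finset.sum_congr rfl
    intro j _
    simp only [Matrix.kroneckerMap_apply, Matrix.one_apply_eq, Xrow, Matrix.of_apply, one_mul]
    exact pow_mul_C _ _ _
  · intro x _ hx
    apply Finset.sum_eq_zero
    intro j _
    simp [Matrix.kroneckerMap_apply, Matrix.one_apply_ne (Ne.symm hx)]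
  · simp

lemma coeffA
    (Q : (n m : ℕ) → Matrix (Fin (2 ^ m)) (Fin (n + m + 1)) P2)
    (G : (n m k : ℕ) → Matrix (Fin (2 ^ m) × Fin (k + 1)) (Fin (n + m + 1)) ℝ)
    (hexp : ∀ n m, Q n m = ∑ k ∈ Finset.range (n + 1), termM n m k (G n m k))
    (n m : ℕ) (i : Fin (2 ^ m)) (c : Fin (n + m + 1)) (j : ℕ) (hj : j ≤ n) :
    coeff (mon (n - j) j) (Q n m i c) = G n m n (i, ⟨j, by omega⟩) c := by
  rw [hexp]
  rw [Matrix.sum_apply]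
  simp only [termM_apply]
  rw [coeff_sum]
  simp only [coeff_sum, coeff_monomial]
  rw [Finset.sum_eq_single n]
  · rw [Finset.sum_eq_single (⟨j, by omega⟩ : Fin (n+1))]
    · rw [if_pos rfl]
    · intro b _ hb
      rw [if_neg]
      intro h
      obtain ⟨h1, h2⟩ := mon_eq_iff.mp h
      apply hb
      apply Fin.ext
      exact h2
    · simp
  · intro k hk hkn
    apply Finset.sum_eq_zero
    intro b _
    rw [if_neg]
    intro h
    obtain ⟨h1, h2⟩ := mon_eq_iff.mp h
    have hbk : (b:ℕ) ≤ k := by omega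
    have hkr : k < n + 1 := Finset.mem_range.mp hk
    omega
  · simp

/-- Recurrence for the leading coefficients of the gradient families
`Q_{n,0} = P_nᵗ`, `Q_{n,m} = ∇(Q_{n+1,m-1})`: if `Q_{n,m} = Σ_{k≤n} (I_{2^m} ⊗ X_kᵗ) G_{n,m,k}`
with `G_{n,0,n} = I_{n+1}`, then
`G_{n,m,n} = diag(I_{2^{m-1}} ⊗ N_{n+1,1}, I_{2^{m-1}} ⊗ N_{n+1,2}) · (G_{n+1,m-1,n+1} ; G_{n+1,m-1,n+1})`. -/
theorem leading_coeff_recurrence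
    (Q : (n m : ℕ) → Matrix (Fin (2 ^ m)) (Fin (n + m + 1)) P2)
    (G : (n m k : ℕ) → Matrix (Fin (2 ^ m) × Fin (k + 1)) (Fin (n + m + 1)) ℝ)
    (hexp : ∀ n m, Q n m = ∑ k ∈ Finset.range (n + 1), termM n m k (G n m k))
    (hmonic : ∀ n, G n 0 n
      = Matrix.of fun (p : Fin (2 ^ 0) × Fin (n + 1)) (j : Fin (n + 0 + 1)) =>
          if ((p.2 : ℕ) = (j : ℕ)) then (1 : ℝ) else 0)
    (hrec : ∀ n m, Q n (m + 1)
      = (Matrix.of fun (r : Fin 2 × Fin (2 ^ m)) (j : Fin (n + 1 + m + 1)) =>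
          (if r.1 = 0 then pderiv (0 : Fin 2) else pderiv 1) (Q (n + 1) m r.2 j)).submatrix
            (eqv m).symm (Fin.cast (by omega)))
    (n k : ℕ) :
    G n (k + 1) n
      = ((Matrix.of fun (r : (Fin 2 × Fin (2 ^ k)) × Fin (n + 1))
              (c : (Fin 2 × Fin (2 ^ k)) × Fin (n + 2)) =>
            if r.1 = c.1 then
              (if r.1.1 = 0 then Nr1 (n + 1) r.2 c.2 else Nr2 (n + 1) r.2 c.2)
            else (0 : ℝ))
          * Matrix.of fun (r : (Fin 2 × Fin (2 ^ k)) × Fin (n + 2))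
              (j : Fin (n + (k + 1) + 1)) =>
            G (n + 1) k (n + 1) (r.1.2, r.2) (Fin.cast (by omega) j)).submatrix
          (fun p : Fin (2 ^ (k + 1)) × Fin (n + 1) => ((eqv k).symm p.1, p.2)) id := by
  ext p j
  obtain ⟨p1, p2⟩ := p
  -- LHS as a coefficient
  have hL := coeffA Q G hexp n (k+1) p1 j p2 (by omega)
  rw [Fin.eta] at hL
  rw [← hL]
  -- use the recurrence
  rw [hrec n k]
  simp only [Matrix.submatrix_apply, Matrix.of_apply, id_eq]
  obtain ⟨d, i⟩ := (eqv k).symm p1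
  -- RHS : compute the product entry
  rw [Matrix.mul_apply, Fintype.sum_prod_type]
  rw [Finset.sum_eq_single (d, i)]
  · by_cases hd : d = 0
    · -- x-derivative
      rw [if_pos hd]
      have hc := coeffA Q G hexp (n+1) k i (Fin.cast (by omega) j) p2 (by omega)
      have hm : (n + 1 - (p2:ℕ)) = (n - (p2:ℕ)) + 1 := by omega
      rw [hm] at hc
      rw [coeff_pderiv0, hc]
      rw [Finset.sum_eq_single (⟨(p2:ℕ), by omega⟩ : Fin (n+2))]
      · simp only [Matrix.of_apply]
        simp only [if_true]
        rw [if_pos hd]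
        simp only [Nr1, Matrix.of_apply, if_true]
        have : ((n + 1 - (p2:ℕ) : ℕ) : ℝ) = ((n - (p2:ℕ) : ℕ) : ℝ) + 1 := by
          rw [hm]; push_cast; ring
        rw [this]
      · intro b _ hb
        simp only [Matrix.of_apply]
        simp only [if_true]
        rw [if_pos hd]
        simp only [Nr1, Matrix.of_apply]
        rw [if_neg, zero_mul]
        intro h; exact hb (Fin.ext h.symm)
      · simp
    · -- y-derivative
      rw [if_neg hd]
      have hc := coeffA Q G hexp (n+1) k i (Fin.cast (by omega) j) ((p2:ℕ)+1) (by omega)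
      have hm : (n + 1 - ((p2:ℕ)+1)) = n - (p2:ℕ) := by omega
      rw [hm] at hc
      rw [coeff_pderiv1, hc]
      rw [Finset.sum_eq_single (⟨(p2:ℕ)+1, by omega⟩ : Fin (n+2))]
      · simp only [Matrix.of_apply]
        simp only [if_true]
        rw [if_neg hd]
        simp only [Nr2, Matrix.of_apply, if_true]
        push_cast
        ring_nf
      · intro b _ hb
        simp only [Matrix.of_apply]
        simp only [if_true]
        rw [if_neg hd]
        simp only [Nr2, Matrix.of_apply]
        rw [if_neg, zero_mul]
        intro h; exact hb (Fin.ext h.symm)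
      · simp
  · intro x _ hx
    apply Finset.sum_eq_zero
    intro b _
    simp only [Matrix.of_apply]
    rw [if_neg (Ne.symm hx), zero_mul]
  · simp


end
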